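/- Let (μ,ν,λ) ∈ Par_n^3 satisfy every extended Horn inequality. Then for all 1 ≤ k ≤ i < j ≤ l ≤ n, with m = min(i−k, l−j) and M = max(i−k, l−j), and every 0 ≤ p ≤ m, one has μ_i − μ_j ≤ λ_k − λ_l + ν_{m−p+1} + ν_{M+p+2} (with ν_r = 0 for r > n), and the same holds for every permutation of the roles of μ, ν, λ. -/

import Mathlib

/-- `μ` is a partition with at most `n` parts: a weakly decreasing sequence
`μ 0 ≥ μ 1 ≥ ⋯` of naturals (the paper's part `μ_{i+1}` is `μ i`, i.e. we use
0-indexing) vanishing from index `n` on. -/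
def IsPartitionN (n : ℕ) (μ : ℕ → ℕ) : Prop :=
  Antitone μ ∧ ∀ i, n ≤ i → μ i = 0

/-- The cells `(row, column)` (both 0-indexed) of the skew shape `lam/mu`. -/
def skewCells (lam mu : ℕ → ℕ) : Set (ℕ × ℕ) :=
  {p | mu p.1 ≤ p.2 ∧ p.2 < lam p.1}

/-- `T` is a Littlewood–Richardson skew tableau of shape `lam/mu` and content
`nu`: the shape `mu` is contained in `lam`, rows weakly increase, columns
strictly increase, the (0-indexed) letter `t` occurs `nu t` times, and every
prefix of the reverse reading word (rows read right-to-left, top-to-bottom)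
contains at least as many letters `t` as letters `t+1`. -/
def IsLRTableau (lam mu nu : ℕ → ℕ) (T : ℕ × ℕ → ℕ) : Prop :=
  (∀ i, mu i ≤ lam i) ∧
  (∀ i j j', mu i ≤ j → j ≤ j' → j' < lam i → T (i, j) ≤ T (i, j')) ∧
  (∀ i j, (i, j) ∈ skewCells lam mu → (i + 1, j) ∈ skewCells lam mu →
    T (i, j) < T (i + 1, j)) ∧
  (∀ t, Set.ncard {p ∈ skewCells lam mu | T p = t} = nu t) ∧
  (∀ i j t,
    Set.ncard {p ∈ skewCells lam mu |
        T p = t + 1 ∧ (p.1 < i ∨ (p.1 = i ∧ j ≤ p.2))} ≤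
      Set.ncard {p ∈ skewCells lam mu |
        T p = t ∧ (p.1 < i ∨ (p.1 = i ∧ j ≤ p.2))})

/-- The Littlewood–Richardson coefficient `c^{lam}_{mu,nu}`: the number of
Littlewood–Richardson skew tableaux of shape `lam/mu` and content `nu`
(tableaux are normalized to vanish off the shape). -/
noncomputable def lrCoeff (lam mu nu : ℕ → ℕ) : ℕ :=
  Set.ncard {T : ℕ × ℕ → ℕ | IsLRTableau lam mu nu T ∧
    ∀ p ∉ skewCells lam mu, T p = 0}

/-- The Newell–Littlewood number
`N_{μ,ν,λ} = ∑_{α,β,γ} c^μ_{α,β} c^ν_{α,γ} c^λ_{β,γ}`, realized as the number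
of tuples `((α, β, γ), (T₁, T₂, T₃))` where `α, β, γ` are partitions and
`T₁, T₂, T₃` are Littlewood–Richardson tableaux witnessing the coefficients
`c^μ_{α,β}`, `c^ν_{α,γ}` and `c^λ_{β,γ}` respectively. -/
noncomputable def nlNumber (mu nu lam : ℕ → ℕ) : ℕ :=
  Set.ncard {x : ((ℕ → ℕ) × (ℕ → ℕ) × (ℕ → ℕ)) ×
      ((ℕ × ℕ → ℕ) × (ℕ × ℕ → ℕ) × (ℕ × ℕ → ℕ)) |
    Antitone x.1.1 ∧ Antitone x.1.2.1 ∧ Antitone x.1.2.2 ∧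
    (IsLRTableau mu x.1.1 x.1.2.1 x.2.1 ∧
      ∀ p ∉ skewCells mu x.1.1, x.2.1 p = 0) ∧
    (IsLRTableau nu x.1.1 x.1.2.2 x.2.2.1 ∧
      ∀ p ∉ skewCells nu x.1.1, x.2.2.1 p = 0) ∧
    (IsLRTableau lam x.1.2.1 x.1.2.2 x.2.2.2 ∧
      ∀ p ∉ skewCells lam x.1.2.1, x.2.2.2 p = 0)}

/-- For `I = {i₁ < ⋯ < i_d} ⊆ {0, 1, 2, …}` (the 0-indexed version of the
paper's subsets of positive integers), `tauPartition I` is `τ(I)`, i.e. the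
partition whose (0-indexed) part `t` is `i_{d-t} − (d−t−1) - 1`; for the
paper's 1-indexed sets this is `τ(I) = (i_d − d ≥ ⋯ ≥ i₂ − 2 ≥ i₁ − 1)`. -/
def tauPartition (I : Finset ℕ) : ℕ → ℕ := fun t =>
  if t < I.card then
    (I.sort (· ≤ ·)).getD (I.card - 1 - t) 0 - (I.card - 1 - t)
  else 0

/-- Conditions (I)–(III) defining the set `𝒢_n` of data for the extended Horn
inequalities: all six sets are subsets of `{0, …, n−1}` (the 0-indexed version
of `[n] = {1, …, n}`), `A ∩ A' = B ∩ B' = C ∩ C' = ∅`,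
`|A| = |B'| + |C'|`, `|B| = |A'| + |C'|`, `|C| = |A'| + |B'|`, and there exist
`A₁, A₂, B₁, B₂, C₁, C₂ ⊆ {0, …, n−1}` with `|A₁| = |A₂| = |A'|`,
`|B₁| = |B₂| = |B'|`, `|C₁| = |C₂| = |C'|` such that
`c^{τ(A')}_{τ(A₁),τ(A₂)}, c^{τ(B')}_{τ(B₁),τ(B₂)}, c^{τ(C')}_{τ(C₁),τ(C₂)} > 0`
and `c^{τ(A)}_{τ(B₁),τ(C₂)}, c^{τ(B)}_{τ(C₁),τ(A₂)}, c^{τ(C)}_{τ(A₁),τ(B₂)} > 0`. -/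
def IsExtHornTuple (n : ℕ) (A A' B B' C C' : Finset ℕ) : Prop :=
  A ⊆ Finset.range n ∧ A' ⊆ Finset.range n ∧ B ⊆ Finset.range n ∧
    B' ⊆ Finset.range n ∧ C ⊆ Finset.range n ∧ C' ⊆ Finset.range n ∧
  Disjoint A A' ∧ Disjoint B B' ∧ Disjoint C C' ∧
  A.card = B'.card + C'.card ∧ B.card = A'.card + C'.card ∧
    C.card = A'.card + B'.card ∧
  ∃ A₁ A₂ B₁ B₂ C₁ C₂ : Finset ℕ,
    A₁ ⊆ Finset.range n ∧ A₂ ⊆ Finset.range n ∧ B₁ ⊆ Finset.range n ∧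
      B₂ ⊆ Finset.range n ∧ C₁ ⊆ Finset.range n ∧ C₂ ⊆ Finset.range n ∧
    A₁.card = A'.card ∧ A₂.card = A'.card ∧ B₁.card = B'.card ∧
      B₂.card = B'.card ∧ C₁.card = C'.card ∧ C₂.card = C'.card ∧
    0 < lrCoeff (tauPartition A') (tauPartition A₁) (tauPartition A₂) ∧
    0 < lrCoeff (tauPartition B') (tauPartition B₁) (tauPartition B₂) ∧
    0 < lrCoeff (tauPartition C') (tauPartition C₁) (tauPartition C₂) ∧
    0 < lrCoeff (tauPartition A) (tauPartition B₁) (tauPartition C₂) ∧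
    0 < lrCoeff (tauPartition B) (tauPartition C₁) (tauPartition A₂) ∧
    0 < lrCoeff (tauPartition C) (tauPartition A₁) (tauPartition B₂)

/-- `(μ, ν, lam)` satisfies every extended Horn inequality (with ambient set
`{0, …, n−1}`). -/
def SatisfiesExtHorn (n : ℕ) (μ ν lam : ℕ → ℕ) : Prop :=
  ∀ A A' B B' C C' : Finset ℕ, IsExtHornTuple n A A' B B' C C' →
    (0 : ℤ) ≤ (∑ i ∈ A, (μ i : ℤ)) - (∑ i ∈ A', (μ i : ℤ)) +
      (∑ j ∈ B, (ν j : ℤ)) - (∑ j ∈ B', (ν j : ℤ)) +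
      (∑ k ∈ C, (lam k : ℤ)) - (∑ k ∈ C', (lam k : ℤ))

namespace ExtHornAux

/-- A two-row partition written as a function. -/
def row2 (u v : ℕ) : ℕ → ℕ := fun t => if t = 0 then u else if t = 1 then v else 0

lemma tau_empty : tauPartition ∅ = row2 0 0 := by
  funext t
  simp only [tauPartition, row2, Finset.card_empty]
  simp

lemma tau_single (x : ℕ) : tauPartition {x} = row2 x 0 := by
  funext t
  simp only [tauPartition, row2, Finset.card_singleton, Finset.sort_singleton]
  rcases t with _ | t
  · simp
  · split_ifs <;> simp_all <;> omega

lemma tau_pair {x y : ℕ} (h : x < y) : tauPartition {x, y} = row2 (y - 1) x := by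
  have hsort : ({x, y} : Finset ℕ).sort (· ≤ ·) = [x, y] := by
    have : ({x, y} : Finset ℕ) = insert x {y} := rfl
    rw [this, Finset.sort_insert, Finset.sort_singleton]
    · intro b hb; simp at hb; omega
    · simp; omega
  have hcard : ({x, y} : Finset ℕ).card = 2 := by
    rw [Finset.card_insert_of_notMem (by simp; omega), Finset.card_singleton]
  funext t
  simp only [tauPartition, row2, hcard, hsort]
  rcases t with _ | _ | t
  · simp
  · simp
  · split_ifs <;> simp_all <;> omega

lemma skewCells_row2 (u v a : ℕ) :
    skewCells (row2 u v) (row2 a 0) =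
      ↑((({0} : Finset ℕ) ×ˢ Finset.Ico a u) ∪ (({1} : Finset ℕ) ×ˢ Finset.Ico 0 v)) := by
  ext ⟨r, c⟩
  simp only [skewCells, row2, Set.mem_setOf_eq, Finset.coe_union, Set.mem_union,
    Finset.coe_product, Set.mem_prod, Finset.mem_coe, Finset.mem_singleton, Finset.mem_Ico]
  split_ifs <;> constructor <;> intro hh <;> omega

lemma lrCoeff_row2_pos {u v a b : ℕ} (hva : v ≤ a) (hau : a ≤ u) (hb : a + b = u + v) :
    0 < lrCoeff (row2 u v) (row2 a 0) (row2 b 0) := by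
  set lam := row2 u v with hlam
  set mu := row2 a 0 with hmu
  set nu := row2 b 0 with hnu
  set F : Finset (ℕ × ℕ) :=
    (({0} : Finset ℕ) ×ˢ Finset.Ico a u) ∪ (({1} : Finset ℕ) ×ˢ Finset.Ico 0 v) with hF
  have hcells : skewCells lam mu = ↑F := skewCells_row2 u v a
  have hdisj : Disjoint (({0} : Finset ℕ) ×ˢ Finset.Ico a u)
      (({1} : Finset ℕ) ×ˢ Finset.Ico 0 v) := by
    rw [Finset.disjoint_left]
    rintro ⟨r, c⟩ h1 h2
    simp only [Finset.mem_product, Finset.mem_singleton] at h1 h2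
    omega
  have hFcard : F.card = (u - a) + v := by
    rw [hF, Finset.card_union_of_disjoint hdisj, Finset.card_product, Finset.card_product]
    simp [Nat.card_Ico]
  have hnu0 : nu 0 = b := by simp [hnu, row2]
  have hnusucc : ∀ t, nu (t + 1) = 0 := by
    intro t
    rcases t with _ | t <;> simp [hnu, row2]
  have hzeroLR : IsLRTableau lam mu nu (fun _ => 0) ∧
      ∀ p ∉ skewCells lam mu, (fun _ : ℕ × ℕ => 0) p = 0 := by
    refine ⟨⟨?_, ?_, ?_, ?_, ?_⟩, fun _ _ => rfl⟩
    · intro t; simp only [hlam, hmu, row2]; split_ifs <;> omega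
    · intro _ _ _ _ _ _; exact le_refl 0
    · intro r c h1 h2
      exfalso
      simp only [skewCells, Set.mem_setOf_eq, hlam, hmu, row2] at h1 h2
      rcases r with _ | r
      · simp at h1 h2; omega
      · simp at h2
    · intro t
      rcases t with _ | t
      · have he : {p ∈ skewCells lam mu | (fun _ : ℕ × ℕ => 0) p = 0} = ↑F := by
          rw [← hcells]; ext p; simp
        rw [he, Set.ncard_coe_finset, hFcard, hnu0]
        omega
      · have he : {p ∈ skewCells lam mu | (fun _ : ℕ × ℕ => 0) p = t + 1} = ∅ := by
          ext p; simp
        rw [he, Set.ncard_empty, hnusucc t]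
    · intro r c t
      have he : {p ∈ skewCells lam mu |
          (fun _ : ℕ × ℕ => 0) p = t + 1 ∧ (p.1 < r ∨ (p.1 = r ∧ c ≤ p.2))} = ∅ := by
        ext p; simp
      rw [he, Set.ncard_empty]
      exact Nat.zero_le _
  have hset : {T : ℕ × ℕ → ℕ | IsLRTableau lam mu nu T ∧
      ∀ p ∉ skewCells lam mu, T p = 0} = {fun _ => 0} := by
    apply Set.eq_singleton_iff_unique_mem.mpr
    refine ⟨hzeroLR, ?_⟩
    rintro T ⟨⟨-, -, -, hcontent, -⟩, hnorm⟩
    funext q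
    show T q = 0
    by_cases hq : q ∈ skewCells lam mu
    · by_contra hTq
      have hfin : {p ∈ skewCells lam mu | T p = T q}.Finite := by
        apply Set.Finite.subset (F.finite_toSet)
        rw [← hcells]; intro p hp; exact hp.1
      have hcard0 : Set.ncard {p ∈ skewCells lam mu | T p = T q} = 0 := by
        rw [hcontent (T q)]
        rcases hTv : T q with _ | t
        · exact absurd hTv hTq
        · exact hnusucc t
      have hmem : q ∈ {p ∈ skewCells lam mu | T p = T q} := ⟨hq, rfl⟩
      rw [(Set.ncard_eq_zero hfin).mp hcard0] at hmem
      exact absurd hmem (Set.notMem_empty q)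
    · exact hnorm q hq
  have hone : lrCoeff lam mu nu = 1 := by
    unfold lrCoeff
    rw [hset, Set.ncard_singleton]
  omega

lemma pos3 {s a b : ℕ} (h : a + b = s) :
    0 < lrCoeff (tauPartition {s}) (tauPartition {a}) (tauPartition {b}) := by
  rw [tau_single, tau_single, tau_single]
  exact lrCoeff_row2_pos (Nat.zero_le a) (by omega) (by omega)

lemma pos3L {s b : ℕ} (h : b = s) :
    0 < lrCoeff (tauPartition {s}) (tauPartition ∅) (tauPartition {b}) := by
  rw [tau_single, tau_empty, tau_single]
  exact lrCoeff_row2_pos (by omega) (by omega) (by omega)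

lemma pos3R {s a : ℕ} (h : a = s) :
    0 < lrCoeff (tauPartition {s}) (tauPartition {a}) (tauPartition ∅) := by
  rw [tau_single, tau_single, tau_empty]
  exact lrCoeff_row2_pos (by omega) (by omega) (by omega)

lemma pos0 : 0 < lrCoeff (tauPartition ∅) (tauPartition ∅) (tauPartition ∅) := by
  rw [tau_empty]
  exact lrCoeff_row2_pos (by omega) (by omega) (by omega)

lemma posP {x y a b : ℕ} (hxy : x < y) (h1 : x ≤ a) (h2 : a + 1 ≤ y)
    (h3 : a + b + 1 = y + x) :
    0 < lrCoeff (tauPartition {x, y}) (tauPartition {a}) (tauPartition {b}) := by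
  rw [tau_pair hxy, tau_single, tau_single]
  exact lrCoeff_row2_pos (by omega) (by omega) (by omega)

lemma tuple1 (n k i j l p : ℕ) (hk : 1 ≤ k) (hki : k ≤ i) (hij : i < j)
    (hjl : j ≤ l) (hln : l ≤ n) (hp : p ≤ min (i - k) (l - j)) :
    IsExtHornTuple n ({j - 1} : Finset ℕ) ({i - 1} : Finset ℕ) ({min (i - k) (l - j) - p, max (i - k) (l - j) + p + 1} : Finset ℕ) (∅ : Finset ℕ) ({k - 1} : Finset ℕ) ({l - 1} : Finset ℕ) := by
  have hne : min (i - k) (l - j) - p ≠ max (i - k) (l - j) + p + 1 := by omega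
  refine ⟨by simp only [Finset.singleton_subset_iff, Finset.mem_range]; omega, by simp only [Finset.singleton_subset_iff, Finset.mem_range]; omega, by simp only [Finset.insert_subset_iff, Finset.singleton_subset_iff, Finset.mem_range]; omega, Finset.empty_subset _, by simp only [Finset.singleton_subset_iff, Finset.mem_range]; omega, by simp only [Finset.singleton_subset_iff, Finset.mem_range]; omega,
    by rw [Finset.disjoint_singleton]; omega, Finset.disjoint_empty_right _, by rw [Finset.disjoint_singleton]; omega,
    by simp, by simp [Finset.card_pair hne], by simp,
    ({k - 1} : Finset ℕ), ({i - k} : Finset ℕ), (∅ : Finset ℕ), (∅ : Finset ℕ), ({l - j} : Finset ℕ), ({j - 1} : Finset ℕ),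
    by simp only [Finset.singleton_subset_iff, Finset.mem_range]; omega, by simp only [Finset.singleton_subset_iff, Finset.mem_range]; omega, Finset.empty_subset _, Finset.empty_subset _, by simp only [Finset.singleton_subset_iff, Finset.mem_range]; omega, by simp only [Finset.singleton_subset_iff, Finset.mem_range]; omega,
    by simp, by simp, by simp, by simp, by simp, by simp,
    pos3 (by omega), pos0, pos3 (by omega), pos3L rfl, posP (by omega) (by omega) (by omega) (by omega), pos3R rfl⟩

lemma tuple2 (n k i j l p : ℕ) (hk : 1 ≤ k) (hki : k ≤ i) (hij : i < j)
    (hjl : j ≤ l) (hln : l ≤ n) (hp : p ≤ min (i - k) (l - j)) :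
    IsExtHornTuple n ({j - 1} : Finset ℕ) ({i - 1} : Finset ℕ) ({k - 1} : Finset ℕ) ({l - 1} : Finset ℕ) ({min (i - k) (l - j) - p, max (i - k) (l - j) + p + 1} : Finset ℕ) (∅ : Finset ℕ) := by
  have hne : min (i - k) (l - j) - p ≠ max (i - k) (l - j) + p + 1 := by omega
  refine ⟨by simp only [Finset.singleton_subset_iff, Finset.mem_range]; omega, by simp only [Finset.singleton_subset_iff, Finset.mem_range]; omega, by simp only [Finset.singleton_subset_iff, Finset.mem_range]; omega, by simp only [Finset.singleton_subset_iff, Finset.mem_range]; omega, by simp only [Finset.insert_subset_iff, Finset.singleton_subset_iff, Finset.mem_range]; omega, Finset.empty_subset _,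
    by rw [Finset.disjoint_singleton]; omega, by rw [Finset.disjoint_singleton]; omega, Finset.disjoint_empty_right _,
    by simp, by simp, by simp [Finset.card_pair hne],
    ({i - k} : Finset ℕ), ({k - 1} : Finset ℕ), ({j - 1} : Finset ℕ), ({l - j} : Finset ℕ), (∅ : Finset ℕ), (∅ : Finset ℕ),
    by simp only [Finset.singleton_subset_iff, Finset.mem_range]; omega, by simp only [Finset.singleton_subset_iff, Finset.mem_range]; omega, by simp only [Finset.singleton_subset_iff, Finset.mem_range]; omega, by simp only [Finset.singleton_subset_iff, Finset.mem_range]; omega, Finset.empty_subset _, Finset.empty_subset _,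
    by simp, by simp, by simp, by simp, by simp, by simp,
    pos3 (by omega), pos3 (by omega), pos0, pos3R rfl, pos3L rfl, posP (by omega) (by omega) (by omega) (by omega)⟩

lemma tuple3 (n k i j l p : ℕ) (hk : 1 ≤ k) (hki : k ≤ i) (hij : i < j)
    (hjl : j ≤ l) (hln : l ≤ n) (hp : p ≤ min (i - k) (l - j)) :
    IsExtHornTuple n ({min (i - k) (l - j) - p, max (i - k) (l - j) + p + 1} : Finset ℕ) (∅ : Finset ℕ) ({j - 1} : Finset ℕ) ({i - 1} : Finset ℕ) ({k - 1} : Finset ℕ) ({l - 1} : Finset ℕ) := by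
  have hne : min (i - k) (l - j) - p ≠ max (i - k) (l - j) + p + 1 := by omega
  refine ⟨by simp only [Finset.insert_subset_iff, Finset.singleton_subset_iff, Finset.mem_range]; omega, Finset.empty_subset _, by simp only [Finset.singleton_subset_iff, Finset.mem_range]; omega, by simp only [Finset.singleton_subset_iff, Finset.mem_range]; omega, by simp only [Finset.singleton_subset_iff, Finset.mem_range]; omega, by simp only [Finset.singleton_subset_iff, Finset.mem_range]; omega,
    Finset.disjoint_empty_right _, by rw [Finset.disjoint_singleton]; omega, by rw [Finset.disjoint_singleton]; omega,
    by simp [Finset.card_pair hne], by simp, by simp,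
    (∅ : Finset ℕ), (∅ : Finset ℕ), ({i - k} : Finset ℕ), ({k - 1} : Finset ℕ), ({j - 1} : Finset ℕ), ({l - j} : Finset ℕ),
    Finset.empty_subset _, Finset.empty_subset _, by simp only [Finset.singleton_subset_iff, Finset.mem_range]; omega, by simp only [Finset.singleton_subset_iff, Finset.mem_range]; omega, by simp only [Finset.singleton_subset_iff, Finset.mem_range]; omega, by simp only [Finset.singleton_subset_iff, Finset.mem_range]; omega,
    by simp, by simp, by simp, by simp, by simp, by simp,
    pos0, pos3 (by omega), pos3 (by omega), posP (by omega) (by omega) (by omega) (by omega), pos3R rfl, pos3L rfl⟩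

lemma tuple4 (n k i j l p : ℕ) (hk : 1 ≤ k) (hki : k ≤ i) (hij : i < j)
    (hjl : j ≤ l) (hln : l ≤ n) (hp : p ≤ min (i - k) (l - j)) :
    IsExtHornTuple n ({min (i - k) (l - j) - p, max (i - k) (l - j) + p + 1} : Finset ℕ) (∅ : Finset ℕ) ({k - 1} : Finset ℕ) ({l - 1} : Finset ℕ) ({j - 1} : Finset ℕ) ({i - 1} : Finset ℕ) := by
  have hne : min (i - k) (l - j) - p ≠ max (i - k) (l - j) + p + 1 := by omega
  refine ⟨by simp only [Finset.insert_subset_iff, Finset.singleton_subset_iff, Finset.mem_range]; omega, Finset.empty_subset _, by simp only [Finset.singleton_subset_iff, Finset.mem_range]; omega, by simp only [Finset.singleton_subset_iff, Finset.mem_range]; omega, by simp only [Finset.singleton_subset_iff, Finset.mem_range]; omega, by simp only [Finset.singleton_subset_iff, Finset.mem_range]; omega,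
    Finset.disjoint_empty_right _, by rw [Finset.disjoint_singleton]; omega, by rw [Finset.disjoint_singleton]; omega,
    by simp [Finset.card_pair hne], by simp, by simp,
    (∅ : Finset ℕ), (∅ : Finset ℕ), ({l - j} : Finset ℕ), ({j - 1} : Finset ℕ), ({k - 1} : Finset ℕ), ({i - k} : Finset ℕ),
    Finset.empty_subset _, Finset.empty_subset _, by simp only [Finset.singleton_subset_iff, Finset.mem_range]; omega, by simp only [Finset.singleton_subset_iff, Finset.mem_range]; omega, by simp only [Finset.singleton_subset_iff, Finset.mem_range]; omega, by simp only [Finset.singleton_subset_iff, Finset.mem_range]; omega,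
    by simp, by simp, by simp, by simp, by simp, by simp,
    pos0, pos3 (by omega), pos3 (by omega), posP (by omega) (by omega) (by omega) (by omega), pos3R rfl, pos3L rfl⟩

lemma tuple5 (n k i j l p : ℕ) (hk : 1 ≤ k) (hki : k ≤ i) (hij : i < j)
    (hjl : j ≤ l) (hln : l ≤ n) (hp : p ≤ min (i - k) (l - j)) :
    IsExtHornTuple n ({k - 1} : Finset ℕ) ({l - 1} : Finset ℕ) ({j - 1} : Finset ℕ) ({i - 1} : Finset ℕ) ({min (i - k) (l - j) - p, max (i - k) (l - j) + p + 1} : Finset ℕ) (∅ : Finset ℕ) := by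
  have hne : min (i - k) (l - j) - p ≠ max (i - k) (l - j) + p + 1 := by omega
  refine ⟨by simp only [Finset.singleton_subset_iff, Finset.mem_range]; omega, by simp only [Finset.singleton_subset_iff, Finset.mem_range]; omega, by simp only [Finset.singleton_subset_iff, Finset.mem_range]; omega, by simp only [Finset.singleton_subset_iff, Finset.mem_range]; omega, by simp only [Finset.insert_subset_iff, Finset.singleton_subset_iff, Finset.mem_range]; omega, Finset.empty_subset _,
    by rw [Finset.disjoint_singleton]; omega, by rw [Finset.disjoint_singleton]; omega, Finset.disjoint_empty_right _,
    by simp, by simp, by simp [Finset.card_pair hne],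
    ({l - j} : Finset ℕ), ({j - 1} : Finset ℕ), ({k - 1} : Finset ℕ), ({i - k} : Finset ℕ), (∅ : Finset ℕ), (∅ : Finset ℕ),
    by simp only [Finset.singleton_subset_iff, Finset.mem_range]; omega, by simp only [Finset.singleton_subset_iff, Finset.mem_range]; omega, by simp only [Finset.singleton_subset_iff, Finset.mem_range]; omega, by simp only [Finset.singleton_subset_iff, Finset.mem_range]; omega, Finset.empty_subset _, Finset.empty_subset _,
    by simp, by simp, by simp, by simp, by simp, by simp,
    pos3 (by omega), pos3 (by omega), pos0, pos3R rfl, pos3L rfl, posP (by omega) (by omega) (by omega) (by omega)⟩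

lemma tuple6 (n k i j l p : ℕ) (hk : 1 ≤ k) (hki : k ≤ i) (hij : i < j)
    (hjl : j ≤ l) (hln : l ≤ n) (hp : p ≤ min (i - k) (l - j)) :
    IsExtHornTuple n ({k - 1} : Finset ℕ) ({l - 1} : Finset ℕ) ({min (i - k) (l - j) - p, max (i - k) (l - j) + p + 1} : Finset ℕ) (∅ : Finset ℕ) ({j - 1} : Finset ℕ) ({i - 1} : Finset ℕ) := by
  have hne : min (i - k) (l - j) - p ≠ max (i - k) (l - j) + p + 1 := by omega
  refine ⟨by simp only [Finset.singleton_subset_iff, Finset.mem_range]; omega, by simp only [Finset.singleton_subset_iff, Finset.mem_range]; omega, by simp only [Finset.insert_subset_iff, Finset.singleton_subset_iff, Finset.mem_range]; omega, Finset.empty_subset _, by simp only [Finset.singleton_subset_iff, Finset.mem_range]; omega, by simp only [Finset.singleton_subset_iff, Finset.mem_range]; omega,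
    by rw [Finset.disjoint_singleton]; omega, Finset.disjoint_empty_right _, by rw [Finset.disjoint_singleton]; omega,
    by simp, by simp [Finset.card_pair hne], by simp,
    ({j - 1} : Finset ℕ), ({l - j} : Finset ℕ), (∅ : Finset ℕ), (∅ : Finset ℕ), ({i - k} : Finset ℕ), ({k - 1} : Finset ℕ),
    by simp only [Finset.singleton_subset_iff, Finset.mem_range]; omega, by simp only [Finset.singleton_subset_iff, Finset.mem_range]; omega, Finset.empty_subset _, Finset.empty_subset _, by simp only [Finset.singleton_subset_iff, Finset.mem_range]; omega, by simp only [Finset.singleton_subset_iff, Finset.mem_range]; omega,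
    by simp, by simp, by simp, by simp, by simp, by simp,
    pos3 (by omega), pos0, pos3 (by omega), pos3L rfl, posP (by omega) (by omega) (by omega) (by omega), pos3R rfl⟩

end ExtHornAux

/-- Proposition 2.5(ii): the extended Horn inequalities imply all
`S₃`-permutations of the extended Weyl inequalities.  The permutation `σ`
permutes the roles of `μ, ν, lam`; indices `k ≤ i < j ≤ l` are the paper's
1-indexed ones. -/
theorem extended_weyl_of_satisfiesExtHorn (n : ℕ) (μ ν lam : ℕ → ℕ)
    (hμ : IsPartitionN n μ) (hν : IsPartitionN n ν) (hlam : IsPartitionN n lam)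
    (hEH : SatisfiesExtHorn n μ ν lam) (σ : Equiv.Perm (Fin 3))
    (k i j l p : ℕ) (hk : 1 ≤ k) (hki : k ≤ i) (hij : i < j) (hjl : j ≤ l)
    (hln : l ≤ n) (hp : p ≤ min (i - k) (l - j)) :
    ((![μ, ν, lam] (σ 0)) (i - 1) : ℤ) - ((![μ, ν, lam] (σ 0)) (j - 1) : ℤ) ≤
      ((![μ, ν, lam] (σ 2)) (k - 1) : ℤ) - ((![μ, ν, lam] (σ 2)) (l - 1) : ℤ) +
      ((![μ, ν, lam] (σ 1)) (min (i - k) (l - j) - p) : ℤ) +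
      ((![μ, ν, lam] (σ 1)) (max (i - k) (l - j) + p + 1) : ℤ) := by
  have hne : min (i - k) (l - j) - p ≠ max (i - k) (l - j) + p + 1 := by omega
  have hσ : (σ 0 = 0 ∧ σ 1 = 1 ∧ σ 2 = 2) ∨ (σ 0 = 0 ∧ σ 1 = 2 ∧ σ 2 = 1) ∨
      (σ 0 = 1 ∧ σ 1 = 0 ∧ σ 2 = 2) ∨ (σ 0 = 1 ∧ σ 1 = 2 ∧ σ 2 = 0) ∨
      (σ 0 = 2 ∧ σ 1 = 0 ∧ σ 2 = 1) ∨ (σ 0 = 2 ∧ σ 1 = 1 ∧ σ 2 = 0) := by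
    revert σ; decide
  rcases hσ with ⟨h0, h1, h2⟩ | ⟨h0, h1, h2⟩ | ⟨h0, h1, h2⟩ | ⟨h0, h1, h2⟩ |
    ⟨h0, h1, h2⟩ | ⟨h0, h1, h2⟩ <;>
      rw [h0, h1, h2] <;> simp only [Matrix.cons_val_zero, Matrix.cons_val_one,
        Matrix.cons_val_two, Matrix.head_cons, Matrix.tail_cons]
  · have key := hEH _ _ _ _ _ _ (ExtHornAux.tuple1 n k i j l p hk hki hij hjl hln hp)
    simp only [Finset.sum_singleton, Finset.sum_empty, Finset.sum_pair hne] at key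
    linarith
  · have key := hEH _ _ _ _ _ _ (ExtHornAux.tuple2 n k i j l p hk hki hij hjl hln hp)
    simp only [Finset.sum_singleton, Finset.sum_empty, Finset.sum_pair hne] at key
    linarith
  · have key := hEH _ _ _ _ _ _ (ExtHornAux.tuple3 n k i j l p hk hki hij hjl hln hp)
    simp only [Finset.sum_singleton, Finset.sum_empty, Finset.sum_pair hne] at key
    linarith
  · have key := hEH _ _ _ _ _ _ (ExtHornAux.tuple5 n k i j l p hk hki hij hjl hln hp)
    simp only [Finset.sum_singleton, Finset.sum_empty, Finset.sum_pair hne] at key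
    linarith
  · have key := hEH _ _ _ _ _ _ (ExtHornAux.tuple4 n k i j l p hk hki hij hjl hln hp)
    simp only [Finset.sum_singleton, Finset.sum_empty, Finset.sum_pair hne] at key
    linarith
  · have key := hEH _ _ _ _ _ _ (ExtHornAux.tuple6 n k i j l p hk hki hij hjl hln hp)
    simp only [Finset.sum_singleton, Finset.sum_empty, Finset.sum_pair hne] at key
    linarith
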